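/- Let A be a right ideal of a ring R with a serial factorization A = A_1⋯A_n. Then: (1) every right ideal A_i is contained in a unique maximal right ideal M_i of R; (2) the maximal right ideals M_1, …, M_n are pairwise distinct, and a maximal right ideal M of R contains A if and only if M = M_i for some i; (3) if n ≥ 2, then each M_i is a two-sided ideal of R and is also a maximal left ideal of R. -/

import Mathlib

open MulOpposite

universe u

/-- The product `A·B` of two right ideals of `R` (right ideals are `Rᵐᵒᵖ`-submodules of `R`):
the set of all finite sums of products `a * b` with `a ∈ A`, `b ∈ B`. -/
def rmul {R : Type u} [Ring R] (A B : Submodule Rᵐᵒᵖ R) : Submodule Rᵐᵒᵖ R :=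
  Submodule.span Rᵐᵒᵖ {x : R | ∃ a ∈ A, ∃ b ∈ B, x = a * b}

/-- The product `A₁⋯Aₙ` of a (possibly empty) list of right ideals. -/
def rprod {R : Type u} [Ring R] : List (Submodule Rᵐᵒᵖ R) → Submodule Rᵐᵒᵖ R
  | [] => ⊤
  | [A] => A
  | A :: l => rmul A (rprod l)

/-- A finite family of right ideals is coindependent if `Aᵢ + ⋂_{j ≠ i} Aⱼ = R` for every `i`. -/
def Coindep {R : Type u} [Ring R] {n : ℕ} (A : Fin n → Submodule Rᵐᵒᵖ R) : Prop :=
  ∀ i, A i ⊔ (⨅ j, ⨅ (_ : j ≠ i), A j) = ⊤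

/-- A module is uniserial if its submodules are linearly ordered by inclusion. -/
def IsUniserialMod (S : Type*) [Ring S] (M : Type*) [AddCommGroup M] [Module S M] : Prop :=
  ∀ N P : Submodule S M, N ≤ P ∨ P ≤ N

/-- A right ideal is a two-sided ideal if it is also closed under left multiplication. -/
def IsTwoSidedRid {R : Type u} [Ring R] (A : Submodule Rᵐᵒᵖ R) : Prop :=
  ∀ (r : R), ∀ x ∈ A, r * x ∈ A

/-- A serial factorization of a right ideal `A`: a factorization `A = A₁⋯Aₙ` into proper
right ideals that pairwise commute, form a coindependent family, and are such that every
quotient `R/Aᵢ` is a uniserial right `R`-module. -/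
def IsSerialFact {R : Type u} [Ring R] {n : ℕ} (A : Submodule Rᵐᵒᵖ R)
    (F : Fin n → Submodule Rᵐᵒᵖ R) : Prop :=
  (∀ i, F i ≠ ⊤) ∧ (∀ i j, rmul (F i) (F j) = rmul (F j) (F i)) ∧ Coindep F ∧
    (∀ i, IsUniserialMod Rᵐᵒᵖ (R ⧸ F i)) ∧ A = rprod (List.ofFn F)

/-- A right ideal has a serial factorization if it admits one of some length. -/
def HasSerialFact {R : Type u} [Ring R] (A : Submodule Rᵐᵒᵖ R) : Prop :=
  ∃ (n : ℕ) (F : Fin n → Submodule Rᵐᵒᵖ R), IsSerialFact A F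

/-- A right chain ring: its right ideals are linearly ordered by inclusion. -/
def IsRightChainRing (R : Type u) [Ring R] : Prop :=
  ∀ A B : Submodule Rᵐᵒᵖ R, A ≤ B ∨ B ≤ A

/-- A ring is right duo if every right ideal is a two-sided ideal. -/
def IsRightDuo (R : Type u) [Ring R] : Prop :=
  ∀ A : Submodule Rᵐᵒᵖ R, IsTwoSidedRid A

/-- The principal right ideal `rR`. -/
def rspan {R : Type u} [Ring R] (r : R) : Submodule Rᵐᵒᵖ R :=
  Submodule.span Rᵐᵒᵖ ({r} : Set R)

section Aux

variable {R : Type u} [Ring R]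

lemma aux_mul_mem_right (N : Submodule Rᵐᵒᵖ R) {x : R} (hx : x ∈ N) (r : R) : x * r ∈ N :=
  N.smul_mem (op r) hx

lemma aux_eq_top_of_one_mem {N : Submodule Rᵐᵒᵖ R} (h : (1:R) ∈ N) : N = ⊤ :=
  Submodule.eq_top_iff'.2 fun x => by simpa using aux_mul_mem_right N h x

lemma aux_mul_mem_rmul {A B : Submodule Rᵐᵒᵖ R} {a b : R} (ha : a ∈ A) (hb : b ∈ B) :
    a * b ∈ rmul A B := Submodule.subset_span ⟨a, ha, b, hb, rfl⟩

lemma aux_rmul_le {A B C : Submodule Rᵐᵒᵖ R} (h : ∀ a ∈ A, ∀ b ∈ B, a * b ∈ C) :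
    rmul A B ≤ C := by
  rw [rmul, Submodule.span_le]
  rintro x ⟨a, ha, b, hb, rfl⟩
  exact h a ha b hb

lemma aux_rmul_le_left (A B : Submodule Rᵐᵒᵖ R) : rmul A B ≤ A :=
  aux_rmul_le fun a ha b _ => aux_mul_mem_right A ha b

lemma aux_rmul_mono_right {A B C : Submodule Rᵐᵒᵖ R} (h : B ≤ C) : rmul A B ≤ rmul A C :=
  aux_rmul_le fun a ha b hb => aux_mul_mem_rmul ha (h hb)

lemma aux_rmul_top (A : Submodule Rᵐᵒᵖ R) : rmul A ⊤ = A := by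
  refine le_antisymm (aux_rmul_le_left _ _) (fun a ha => ?_)
  simpa using aux_mul_mem_rmul ha (Submodule.mem_top (x := (1:R)))

lemma aux_rprod_cons (A : Submodule Rᵐᵒᵖ R) (l : List (Submodule Rᵐᵒᵖ R)) :
    rprod (A :: l) = rmul A (rprod l) := by
  cases l with
  | nil =>
    rw [show rprod [A] = A from rfl, show rprod ([] : List (Submodule Rᵐᵒᵖ R)) = ⊤ from rfl,
      aux_rmul_top]
  | cons B t => rfl

lemma aux_rprod_le_of_mem {l : List (Submodule Rᵐᵒᵖ R)}
    (hc : ∀ X ∈ l, ∀ Y ∈ l, rmul X Y = rmul Y X) {X : Submodule Rᵐᵒᵖ R} (hX : X ∈ l) :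
    rprod l ≤ X := by
  induction l with
  | nil => cases hX
  | cons A t ih =>
    rw [aux_rprod_cons]
    rcases List.mem_cons.1 hX with rfl | hX'
    · exact aux_rmul_le_left _ _
    · have h1 : rprod t ≤ X :=
        ih (fun x hx y hy => hc x (List.mem_cons_of_mem _ hx) y (List.mem_cons_of_mem _ hy)) hX'
      calc rmul A (rprod t) ≤ rmul A X := aux_rmul_mono_right h1
        _ = rmul X A := hc A (List.mem_cons_self) X (List.mem_cons_of_mem _ hX')
        _ ≤ X := aux_rmul_le_left _ _

lemma aux_sup_rmul_eq_top {C D M : Submodule Rᵐᵒᵖ R} (hC : C ⊔ M = ⊤) (hD : D ⊔ M = ⊤) :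
    rmul C D ⊔ M = ⊤ := by
  obtain ⟨c, hc, m, hm, hcm⟩ := Submodule.mem_sup.1 (hC ▸ Submodule.mem_top : (1:R) ∈ C ⊔ M)
  obtain ⟨d, hd, m', hm', hdm⟩ := Submodule.mem_sup.1 (hD ▸ Submodule.mem_top : (1:R) ∈ D ⊔ M)
  apply aux_eq_top_of_one_mem
  have h1 : (1:R) = c * d + (m * d + m') := by
    have hd' : d = c * d + m * d := by rw [← add_mul, hcm, one_mul]
    calc (1:R) = d + m' := hdm.symm
      _ = (c * d + m * d) + m' := by rw [← hd']
      _ = c * d + (m * d + m') := add_assoc _ _ _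
  rw [h1]
  exact add_mem (Submodule.mem_sup_left (aux_mul_mem_rmul hc hd))
    (Submodule.mem_sup_right (add_mem (aux_mul_mem_right M hm d) hm'))

lemma aux_rprod_sup_eq_top {l : List (Submodule Rᵐᵒᵖ R)} {M : Submodule Rᵐᵒᵖ R}
    (h : ∀ X ∈ l, X ⊔ M = ⊤) : rprod l ⊔ M = ⊤ := by
  induction l with
  | nil => rw [show rprod ([] : List (Submodule Rᵐᵒᵖ R)) = ⊤ from rfl]; exact top_sup_eq M
  | cons A t ih =>
    rw [aux_rprod_cons]
    exact aux_sup_rmul_eq_top (h A (List.mem_cons_self))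
      (ih fun X hX => h X (List.mem_cons_of_mem _ hX))

lemma aux_exists_coatom_ge (N : Submodule Rᵐᵒᵖ R) (h : N ≠ ⊤) :
    ∃ M : Submodule Rᵐᵒᵖ R, IsCoatom M ∧ N ≤ M := by
  have hco : IsCoatomic (Submodule Rᵐᵒᵖ R) := by
    apply CompleteLattice.coatomic_of_top_compact
    have htop : (⊤ : Submodule Rᵐᵒᵖ R) = Submodule.span Rᵐᵒᵖ {(1:R)} := by
      refine le_antisymm (fun x _ => ?_) le_top
      exact Submodule.mem_span_singleton.2 ⟨op x, by simp⟩
    rw [htop]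
    exact Submodule.singleton_span_isCompactElement 1
  exact (eq_top_or_exists_le_coatom N).resolve_left h

end Aux

/-- Proposition 3.10: if `A = A₁⋯Aₙ` is a serial factorization, then (1) each `Aᵢ` lies in a
unique maximal right ideal `Mᵢ`; (2) the `Mᵢ` are pairwise distinct and are exactly the
maximal right ideals containing `A`; (3) if `n ≥ 2`, each `Mᵢ` is two-sided and is a maximal
left ideal as well. -/
theorem statement16 {R : Type u} [Ring R] [Nontrivial R] {n : ℕ}
    (A : Submodule Rᵐᵒᵖ R) (F : Fin n → Submodule Rᵐᵒᵖ R)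
    (hsf : IsSerialFact A F) :
    ∃ M : Fin n → Submodule Rᵐᵒᵖ R,
      (∀ i, IsCoatom (M i) ∧ F i ≤ M i ∧
        ∀ N : Submodule Rᵐᵒᵖ R, IsCoatom N → F i ≤ N → N = M i) ∧
      Function.Injective M ∧
      (∀ N : Submodule Rᵐᵒᵖ R, IsCoatom N → (A ≤ N ↔ ∃ i, N = M i)) ∧
      (2 ≤ n → ∀ i, IsTwoSidedRid (M i) ∧
        ∃ L : Submodule R R, (L : Set R) = (M i : Set R) ∧ IsCoatom L) := by
  obtain ⟨hne, hcomm, hcoind, huni, hA⟩ := hsf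
  -- right ideals above `F i` are linearly ordered
  have hchain : ∀ i (N P : Submodule Rᵐᵒᵖ R), F i ≤ N → F i ≤ P → N ≤ P ∨ P ≤ N := by
    intro i N P hN hP
    have key : ∀ N P : Submodule Rᵐᵒᵖ R, F i ≤ N → F i ≤ P →
        Submodule.map (F i).mkQ N ≤ Submodule.map (F i).mkQ P → N ≤ P := by
      intro N P hN hP h
      have h2 := Submodule.comap_mono (f := (F i).mkQ) h
      rwa [Submodule.comap_map_mkQ, Submodule.comap_map_mkQ, sup_eq_right.2 hN,
        sup_eq_right.2 hP] at h2
    rcases huni i (Submodule.map (F i).mkQ N) (Submodule.map (F i).mkQ P) with h | h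
    · exact Or.inl (key N P hN hP h)
    · exact Or.inr (key P N hP hN h)
  -- the maximal right ideals
  have hex : ∀ i, ∃ M : Submodule Rᵐᵒᵖ R, IsCoatom M ∧ F i ≤ M :=
    fun i => aux_exists_coatom_ge (F i) (hne i)
  choose M hMco hMle using hex
  have huniq : ∀ i (N : Submodule Rᵐᵒᵖ R), IsCoatom N → F i ≤ N → N = M i := by
    intro i N hN hle
    by_contra hne'
    rcases hchain i N (M i) hle (hMle i) with h | h
    · exact (hMco i).1 (hN.2 _ (h.lt_of_ne hne'))
    · exact hN.1 ((hMco i).2 _ (h.lt_of_ne (Ne.symm hne')))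
  -- the maximum property of `M i`
  have hmax : ∀ i (X : Submodule Rᵐᵒᵖ R), F i ≤ X → X ≠ ⊤ → X ≤ M i := by
    intro i X hX hXt
    rcases hchain i X (M i) hX (hMle i) with h | h
    · exact h
    · rcases eq_or_lt_of_le h with h' | h'
      · exact h'.ge
      · exact absurd ((hMco i).2 _ h') hXt
  -- commutation for the list
  have hcomm' : ∀ X ∈ List.ofFn F, ∀ Y ∈ List.ofFn F, rmul X Y = rmul Y X := by
    intro X hX Y hY
    obtain ⟨i, rfl⟩ := List.mem_ofFn.1 hX
    obtain ⟨j, rfl⟩ := List.mem_ofFn.1 hY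
    exact hcomm i j
  have hAle : ∀ i, A ≤ F i := by
    intro i
    rw [hA]
    exact aux_rprod_le_of_mem hcomm' (List.mem_ofFn.2 ⟨i, rfl⟩)
  refine ⟨M, fun i => ⟨hMco i, hMle i, huniq i⟩, ?_, ?_, ?_⟩
  · -- injectivity
    intro i j hij
    by_contra hij'
    have h2 : (⨅ k, ⨅ (_ : k ≠ i), F k) ≤ F j :=
      (iInf_le _ j).trans (iInf_le _ (Ne.symm hij'))
    have h3 : (⊤ : Submodule Rᵐᵒᵖ R) ≤ M i := by
      rw [← hcoind i]
      exact sup_le (hMle i) (h2.trans (hij ▸ hMle j))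
    exact (hMco i).1 (top_unique h3)
  · -- characterization of maximal right ideals over A
    intro N hN
    constructor
    · intro hAN
      by_contra hno
      push_neg at hno
      have hsup : ∀ X ∈ List.ofFn F, X ⊔ N = ⊤ := by
        intro X hX
        obtain ⟨i, rfl⟩ := List.mem_ofFn.1 hX
        rcases eq_or_lt_of_le (le_sup_right : N ≤ F i ⊔ N) with h | h
        · exact absurd (huniq i N hN (le_sup_left.trans h.ge)) (hno i)
        · exact hN.2 _ h
      have htop := aux_rprod_sup_eq_top hsup
      rw [← hA] at htop
      exact hN.1 (top_unique (htop ▸ sup_le hAN le_rfl))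
    · rintro ⟨i, rfl⟩
      exact (hAle i).trans (hMle i)
  · -- part (3)
    intro hn2 i
    have : Nontrivial (Fin n) := by
      refine ⟨⟨0, by omega⟩, ⟨1, by omega⟩, ?_⟩
      simp [Fin.ext_iff]
    obtain ⟨j, hji⟩ := exists_ne i
    have hFij : F i ⊔ F j = ⊤ := by
      refine top_unique ?_
      rw [← hcoind i]
      exact sup_le_sup_left ((iInf_le _ j).trans (iInf_le _ hji)) _
    -- F i is a two-sided ideal
    have hFtwo : IsTwoSidedRid (F i) := by
      intro r x hx
      obtain ⟨a, ha, b, hb, hab⟩ :=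
        Submodule.mem_sup.1 (hFij ▸ Submodule.mem_top : r ∈ F i ⊔ F j)
      have h1 : a * x ∈ F i := aux_mul_mem_right _ ha x
      have h2 : b * x ∈ F i := by
        have := aux_mul_mem_rmul hb hx
        rw [hcomm j i] at this
        exact aux_rmul_le_left (F i) (F j) this
      have h3 : r * x = a * x + b * x := by rw [← hab, add_mul]
      rw [h3]; exact add_mem h1 h2
    -- right-invertibility modulo F i of elements outside M i
    have hinv : ∀ y : R, y ∉ M i → ∃ s : R, 1 - y * s ∈ F i := by
      intro y hy
      have hX : Submodule.span Rᵐᵒᵖ ({y} : Set R) ⊔ F i = ⊤ := by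
        by_contra hXt
        exact hy ((hmax i _ le_sup_right hXt)
          (Submodule.mem_sup_left (Submodule.mem_span_singleton_self y)))
      obtain ⟨u, hu, a, haF, huab⟩ :=
        Submodule.mem_sup.1 (hX ▸ Submodule.mem_top : (1:R) ∈ _ ⊔ F i)
      obtain ⟨c, hc⟩ := Submodule.mem_span_singleton.1 hu
      refine ⟨c.unop, ?_⟩
      have h4 : (1:R) - y * c.unop = a := by
        have h5 : y * c.unop = u := hc
        rw [h5, ← huab]; abel
      rw [h4]; exact haF
    -- M i is two-sided
    have hMtwo : IsTwoSidedRid (M i) := by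
      intro r x hx
      by_contra hrx
      obtain ⟨s, hs⟩ := hinv (r * x) hrx
      set t := x * s * r with ht
      have htM : t ∈ M i := aux_mul_mem_right _ (aux_mul_mem_right _ hx s) r
      have h1t : (1:R) - t ∉ M i := by
        intro h
        refine (hMco i).1 (aux_eq_top_of_one_mem ?_)
        simpa using add_mem h htM
      obtain ⟨v, hv⟩ := hinv (1 - t) h1t
      have h0 : r * x * s - 1 ∈ F i := by
        have := (F i).neg_mem hs
        rwa [neg_sub] at this
      have htt : t * t - t ∈ F i := by
        have h2 : x * s * ((r * x * s - 1) * r) ∈ F i :=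
          hFtwo (x * s) _ (aux_mul_mem_right _ h0 r)
        have h3 : t * t - t = x * s * ((r * x * s - 1) * r) := by rw [ht]; noncomm_ring
        rw [h3]; exact h2
      have htA : t ∈ F i := by
        have e1 : t * (1 - (1 - t) * v) ∈ F i := hFtwo t _ hv
        have e3 : (t - t * t) * v ∈ F i := by
          refine aux_mul_mem_right _ ?_ v
          have := (F i).neg_mem htt
          rwa [neg_sub] at this
        have e4 : t = t * (1 - (1 - t) * v) + (t - t * t) * v := by noncomm_ring
        rw [e4]; exact add_mem e1 e3
      have hww : (r * x * s) * (r * x * s) ∈ F i := by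
        have h5 : (r * x * s) * (r * x * s) = r * t * (x * s) := by rw [ht]; noncomm_ring
        rw [h5]
        exact aux_mul_mem_right _ (hFtwo r t htA) (x * s)
      have hone : (1:R) ∈ F i := by
        have h6 : (1:R) = ((1 - r * x * s) + (r * x * s) * (1 - r * x * s))
            + (r * x * s) * (r * x * s) := by noncomm_ring
        rw [h6]
        exact add_mem (add_mem hs (hFtwo _ _ hs)) hww
      exact hne i (aux_eq_top_of_one_mem hone)
    refine ⟨hMtwo, ?_⟩
    -- the left ideal with the same carrier
    refine ⟨{ carrier := (M i : Set R),
              add_mem' := fun ha hb => add_mem ha hb,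
              zero_mem' := (M i).zero_mem,
              smul_mem' := fun c x hx => by simpa [smul_eq_mul] using hMtwo c x hx }, rfl, ?_, ?_⟩
    · -- L ≠ ⊤
      intro h
      refine (hMco i).1 (aux_eq_top_of_one_mem ?_)
      have h1 : (1:R) ∈ (⊤ : Submodule R R) := trivial
      rw [← h] at h1
      exact h1
    · -- every left ideal strictly above L is ⊤
      intro L' hLL'
      obtain ⟨y, hyL', hyL⟩ := SetLike.exists_of_lt hLL'
      have hyM : y ∉ M i := hyL
      -- left inverse modulo M i
      have key : ∃ s : R, 1 - s * y ∈ M i := by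
        obtain ⟨s, hs⟩ := hinv y hyM
        have hsM : s ∉ M i := by
          intro h
          refine (hMco i).1 (aux_eq_top_of_one_mem ?_)
          have h1 : y * s ∈ M i := hMtwo y s h
          simpa using add_mem (hMle i hs) h1
        obtain ⟨u, hu⟩ := hinv s hsM
        refine ⟨s, ?_⟩
        have hyu : y - u ∈ M i := by
          have e1 : y * (1 - s * u) ∈ M i := hMtwo y _ (hMle i hu)
          have e2 : (1 - y * s) * u ∈ M i := aux_mul_mem_right _ (hMle i hs) u
          have e3 : y - u = y * (1 - s * u) - (1 - y * s) * u := by noncomm_ring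
          rw [e3]; exact sub_mem e1 e2
        have e5 : (1:R) - s * y = (1 - s * u) - s * (y - u) := by noncomm_ring
        rw [e5]
        exact sub_mem (hMle i hu) (hMtwo s _ hyu)
      obtain ⟨s, hs⟩ := key
      have h1 : (1:R) ∈ L' := by
        have hmem : (1:R) - s * y ∈ L' := hLL'.le hs
        have h2 : s • y ∈ L' := L'.smul_mem s hyL'
        rw [smul_eq_mul] at h2
        simpa using add_mem hmem h2
      exact Submodule.eq_top_iff'.2 fun x => by simpa using L'.smul_mem x h1
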